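/- arXiv:cs/0502061 — 2 statements merged into one kernel-verified Lean document; each statement's English description precedes it below -/
import Mathlib

section
/- Let m > 1 and 0 ≤ p < 1 be real numbers, let A = √(p² + 4m(m−1)), set λ₁ = (p(2m−1)+A)/(2m(1+p)) and λ₂ = (p(2m−1)−A)/(2m(1+p)), and let t₀ > 0. Then there exist unique real numbers a₁, a₂ such that, setting bᵢ = aᵢ·((1+p)λᵢ − p(m−1)/m) for i = 1,2, the functions k(t) = a₁(t/t₀)^{λ₁} + a₂(t/t₀)^{λ₂} and y(t) = b₁(t/t₀)^{λ₁} + b₂(t/t₀)^{λ₂} satisfy the DInEd mean-field system on t > 0 together with the initial conditions k(t₀) = p and y(t₀) = 1. -/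
lemma rpow_deriv_aux (a lam t₀ t : ℝ) (ht₀ : 0 < t₀) (ht : 0 < t) :
    HasDerivAt (fun s : ℝ => a * (s / t₀) ^ lam) (a * lam * (t / t₀) ^ lam / t) t := by
  have hb : 0 < t / t₀ := div_pos ht ht₀
  have h1 : HasDerivAt (fun s : ℝ => s / t₀) (1 / t₀) t := by
    simpa using (hasDerivAt_id t).div_const t₀
  have h2 : HasDerivAt (fun x : ℝ => x ^ lam) (lam * (t / t₀) ^ (lam - 1)) (t / t₀) :=
    Real.hasDerivAt_rpow_const (Or.inl hb.ne')
  have h3 := (h2.comp t h1).const_mul a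
  refine h3.congr_deriv ?_
  rw [Real.rpow_sub_one hb.ne']
  field_simp

lemma dined_ode_aux (m p lam1 lam2 t₀ a1 a2 : ℝ)
    (hl1' : lam1 = ((1 + p) * lam1 - p * (m - 1) / m) / (1 + p) + p * (m - 1) / (m * (1 + p)))
    (hl2' : lam2 = ((1 + p) * lam2 - p * (m - 1) / m) / (1 + p) + p * (m - 1) / (m * (1 + p)))
    (hk1 : ((1 + p) * lam1 - p * (m - 1) / m) * lam1
      = p * ((1 + p) * lam1 - p * (m - 1) / m) / (1 + p) + (m - 1) / (m * (1 + p)))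
    (hk2 : ((1 + p) * lam2 - p * (m - 1) / m) * lam2
      = p * ((1 + p) * lam2 - p * (m - 1) / m) / (1 + p) + (m - 1) / (m * (1 + p)))
    (ht₀ : 0 < t₀) (t : ℝ) (ht : 0 < t) :
    HasDerivAt
      (fun s : ℝ => a1 * (s / t₀) ^ lam1 + a2 * (s / t₀) ^ lam2)
      (((a1 * ((1 + p) * lam1 - p * (m - 1) / m)) * (t / t₀) ^ lam1
          + (a2 * ((1 + p) * lam2 - p * (m - 1) / m)) * (t / t₀) ^ lam2)
          / ((1 + p) * t)
        + (p * (m - 1) / (m * (1 + p)))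
          * (a1 * (t / t₀) ^ lam1 + a2 * (t / t₀) ^ lam2) / t) t ∧
    HasDerivAt
      (fun s : ℝ => (a1 * ((1 + p) * lam1 - p * (m - 1) / m)) * (s / t₀) ^ lam1
          + (a2 * ((1 + p) * lam2 - p * (m - 1) / m)) * (s / t₀) ^ lam2)
      ((p / (1 + p))
          * ((a1 * ((1 + p) * lam1 - p * (m - 1) / m)) * (t / t₀) ^ lam1
            + (a2 * ((1 + p) * lam2 - p * (m - 1) / m)) * (t / t₀) ^ lam2) / t
        + ((m - 1) / (m * (1 + p)))
          * (a1 * (t / t₀) ^ lam1 + a2 * (t / t₀) ^ lam2) / t) t := by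
  set X1 : ℝ := (t / t₀) ^ lam1 with hX1
  set X2 : ℝ := (t / t₀) ^ lam2 with hX2
  constructor
  · have h := (rpow_deriv_aux a1 lam1 t₀ t ht₀ ht).add (rpow_deriv_aux a2 lam2 t₀ t ht₀ ht)
    rw [← hX1, ← hX2] at h
    refine h.congr_deriv ?_
    symm
    rw [← div_div]
    calc ((a1 * ((1 + p) * lam1 - p * (m - 1) / m)) * X1
            + (a2 * ((1 + p) * lam2 - p * (m - 1) / m)) * X2) / (1 + p) / t
          + (p * (m - 1) / (m * (1 + p))) * (a1 * X1 + a2 * X2) / t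
        = a1 * X1 * ((((1 + p) * lam1 - p * (m - 1) / m) / (1 + p)
              + p * (m - 1) / (m * (1 + p))) / t)
          + a2 * X2 * ((((1 + p) * lam2 - p * (m - 1) / m) / (1 + p)
              + p * (m - 1) / (m * (1 + p))) / t) := by ring
      _ = a1 * X1 * (lam1 / t) + a2 * X2 * (lam2 / t) := by rw [← hl1', ← hl2']
      _ = a1 * lam1 * X1 / t + a2 * lam2 * X2 / t := by ring
  · have h := (rpow_deriv_aux (a1 * ((1 + p) * lam1 - p * (m - 1) / m)) lam1 t₀ t ht₀ ht).add
      (rpow_deriv_aux (a2 * ((1 + p) * lam2 - p * (m - 1) / m)) lam2 t₀ t ht₀ ht)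
    rw [← hX1, ← hX2] at h
    refine h.congr_deriv ?_
    symm
    calc (p / (1 + p))
            * ((a1 * ((1 + p) * lam1 - p * (m - 1) / m)) * X1
              + (a2 * ((1 + p) * lam2 - p * (m - 1) / m)) * X2) / t
          + ((m - 1) / (m * (1 + p))) * (a1 * X1 + a2 * X2) / t
        = a1 * X1 * ((p * ((1 + p) * lam1 - p * (m - 1) / m) / (1 + p)
              + (m - 1) / (m * (1 + p))) / t)
          + a2 * X2 * ((p * ((1 + p) * lam2 - p * (m - 1) / m) / (1 + p)
              + (m - 1) / (m * (1 + p))) / t) := by ring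
      _ = a1 * X1 * (((1 + p) * lam1 - p * (m - 1) / m) * lam1 / t)
          + a2 * X2 * (((1 + p) * lam2 - p * (m - 1) / m) * lam2 / t) := by rw [← hk1, ← hk2]
      _ = a1 * ((1 + p) * lam1 - p * (m - 1) / m) * lam1 * X1 / t
          + a2 * ((1 + p) * lam2 - p * (m - 1) / m) * lam2 * X2 / t := by ring


/-- For `m > 1`, `0 ≤ p < 1`, `t₀ > 0`, with `A = √(p² + 4m(m−1))`,
`λ₁ = (p(2m−1)+A)/(2m(1+p))`, `λ₂ = (p(2m−1)−A)/(2m(1+p))`, there exist unique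
reals `a₁, a₂` such that, with `bᵢ = aᵢ((1+p)λᵢ − p(m−1)/m)`,
`k(t) = a₁(t/t₀)^{λ₁} + a₂(t/t₀)^{λ₂}` and `y(t) = b₁(t/t₀)^{λ₁} + b₂(t/t₀)^{λ₂}`
satisfy the DInEd mean-field system on `t > 0` with `k(t₀) = p` and `y(t₀) = 1`. -/
theorem dined_unique_solution (m p A lam1 lam2 t₀ : ℝ)
    (hm : 1 < m) (hp0 : 0 ≤ p) (hp1 : p < 1)
    (hA : A = Real.sqrt (p ^ 2 + 4 * m * (m - 1)))
    (hl1 : lam1 = (p * (2 * m - 1) + A) / (2 * m * (1 + p)))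
    (hl2 : lam2 = (p * (2 * m - 1) - A) / (2 * m * (1 + p)))
    (ht₀ : 0 < t₀) :
    ∃! a : ℝ × ℝ,
      (∀ t : ℝ, 0 < t →
        HasDerivAt
          (fun s : ℝ => a.1 * (s / t₀) ^ lam1 + a.2 * (s / t₀) ^ lam2)
          (((a.1 * ((1 + p) * lam1 - p * (m - 1) / m)) * (t / t₀) ^ lam1
              + (a.2 * ((1 + p) * lam2 - p * (m - 1) / m)) * (t / t₀) ^ lam2)
              / ((1 + p) * t)
            + (p * (m - 1) / (m * (1 + p)))
              * (a.1 * (t / t₀) ^ lam1 + a.2 * (t / t₀) ^ lam2) / t) t ∧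
        HasDerivAt
          (fun s : ℝ => (a.1 * ((1 + p) * lam1 - p * (m - 1) / m)) * (s / t₀) ^ lam1
              + (a.2 * ((1 + p) * lam2 - p * (m - 1) / m)) * (s / t₀) ^ lam2)
          ((p / (1 + p))
              * ((a.1 * ((1 + p) * lam1 - p * (m - 1) / m)) * (t / t₀) ^ lam1
                + (a.2 * ((1 + p) * lam2 - p * (m - 1) / m)) * (t / t₀) ^ lam2) / t
            + ((m - 1) / (m * (1 + p)))
              * (a.1 * (t / t₀) ^ lam1 + a.2 * (t / t₀) ^ lam2) / t) t) ∧
      a.1 * (t₀ / t₀) ^ lam1 + a.2 * (t₀ / t₀) ^ lam2 = p ∧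
      (a.1 * ((1 + p) * lam1 - p * (m - 1) / m)) * (t₀ / t₀) ^ lam1
        + (a.2 * ((1 + p) * lam2 - p * (m - 1) / m)) * (t₀ / t₀) ^ lam2 = 1 := by
  have hm0 : m ≠ 0 := by linarith
  have h1p : (0:ℝ) < 1 + p := by linarith
  have h1p' : (1:ℝ) + p ≠ 0 := h1p.ne'
  have hA2 : A ^ 2 = p ^ 2 + 4 * m * (m - 1) := by
    rw [hA]; exact Real.sq_sqrt (by nlinarith)
  have hApos : 0 < A := by
    rw [hA]; exact Real.sqrt_pos.mpr (by nlinarith)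
  have hsq1 : (2 * m * (1 + p) * lam1 - p * (2 * m - 1)) ^ 2 = A ^ 2 := by
    rw [hl1]; field_simp; ring
  have hsq2 : (2 * m * (1 + p) * lam2 - p * (2 * m - 1)) ^ 2 = A ^ 2 := by
    rw [hl2]; field_simp; ring
  have hq : ∀ lam : ℝ, (2 * m * (1 + p) * lam - p * (2 * m - 1)) ^ 2 = A ^ 2 →
      ((1 + p) * lam - p * (m - 1) / m) * lam
        = p * ((1 + p) * lam - p * (m - 1) / m) / (1 + p) + (m - 1) / (m * (1 + p)) := by
    intro lam h
    rw [hA2] at h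
    field_simp
    nlinarith [h]
  have hk1 := hq lam1 hsq1
  have hk2 := hq lam2 hsq2
  have hl1' : lam1 = ((1 + p) * lam1 - p * (m - 1) / m) / (1 + p)
      + p * (m - 1) / (m * (1 + p)) := by field_simp; ring
  have hl2' : lam2 = ((1 + p) * lam2 - p * (m - 1) / m) / (1 + p)
      + p * (m - 1) / (m * (1 + p)) := by field_simp; ring
  set c1 := (1 + p) * lam1 - p * (m - 1) / m with hc1
  set c2 := (1 + p) * lam2 - p * (m - 1) / m with hc2
  have hc12 : c1 - c2 = A / m := by
    rw [hc1, hc2, hl1, hl2]; field_simp; ring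
  have hcne : c1 - c2 ≠ 0 := by rw [hc12]; positivity
  have hone : (t₀ / t₀ : ℝ) = 1 := div_self ht₀.ne'
  refine ⟨((1 - p * c2) / (c1 - c2), p - (1 - p * c2) / (c1 - c2)), ⟨?_, ?_, ?_⟩, ?_⟩
  · intro t ht
    exact dined_ode_aux m p lam1 lam2 t₀ _ _ hl1' hl2' hk1 hk2 ht₀ t ht
  · simp only [hone, Real.one_rpow, mul_one]
    ring
  · simp only [hone, Real.one_rpow, mul_one]
    have ha1 : (1 - p * c2) / (c1 - c2) * (c1 - c2) = 1 - p * c2 :=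
      div_mul_cancel₀ _ hcne
    linear_combination ha1
  · rintro ⟨x1, x2⟩ ⟨-, h1, h2⟩
    simp only [hone, Real.one_rpow, mul_one] at h1 h2
    have hx1 : x1 = (1 - p * c2) / (c1 - c2) := by
      rw [eq_div_iff hcne]
      linear_combination h2 - c2 * h1
    have hx2 : x2 = p - (1 - p * c2) / (c1 - c2) := by
      rw [← hx1]; linarith
    simp [Prod.ext_iff, hx1, hx2]
end

section
/- Let c > 0, λ > 0 and t > 0 be real numbers, and let T be a random variable uniformly distributed on the interval (0, t]. Then for every real k ≥ c, the probability that c·(t/T)^λ ≥ k equals (c/k)^{1/λ}; equivalently, P[c·(t/T)^λ < k] = 1 − (c/k)^{1/λ}. -/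
open MeasureTheory ProbabilityTheory

/-- If `T` is uniformly distributed on `(0, t]`, then for every `k ≥ c` the
probability that `c(t/T)^λ ≥ k` is `(c/k)^{1/λ}`; equivalently the probability
that `c(t/T)^λ < k` is `1 − (c/k)^{1/λ}`. -/
theorem dined_degree_tail_probability {Ω : Type*} [MeasureSpace Ω]
    [IsProbabilityMeasure (ℙ : Measure Ω)]
    (c lam t : ℝ) (hc : 0 < c) (hlam : 0 < lam) (ht : 0 < t)
    (T : Ω → ℝ) (hT : pdf.IsUniform T (Set.Ioc 0 t) ℙ) :
    ∀ k : ℝ, c ≤ k →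
      ℙ {ω | k ≤ c * (t / T ω) ^ lam} = ENNReal.ofReal ((c / k) ^ (1 / lam)) ∧
      ℙ {ω | c * (t / T ω) ^ lam < k} = ENNReal.ofReal (1 - (c / k) ^ (1 / lam)) := by
  intro k hk
  have hk0 : 0 < k := hc.trans_le hk
  have hns : (volume (Set.Ioc (0:ℝ) t)) ≠ 0 := by
    simp [Real.volume_Ioc, ht, ENNReal.ofReal_eq_zero, not_le]
  have hnt : (volume (Set.Ioc (0:ℝ) t)) ≠ ⊤ := by simp [Real.volume_Ioc]
  set r : ℝ := (c / k) ^ (1 / lam) with hr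
  have hr0 : 0 < r := Real.rpow_pos_of_pos (div_pos hc hk0) _
  have hr1 : r ≤ 1 := by
    apply Real.rpow_le_one (le_of_lt (div_pos hc hk0))
    · exact div_le_one_of_le₀ hk hk0.le
    · positivity
  set b : ℝ := t * r with hb
  have hb0 : 0 < b := mul_pos ht hr0
  have hbt : b ≤ t := by nlinarith
  -- the auxiliary quantity a = (k/c)^(1/λ)
  set a : ℝ := (k / c) ^ (1 / lam) with ha
  have ha0 : 0 < a := Real.rpow_pos_of_pos (div_pos hk0 hc) _
  have hainv : a⁻¹ = r := by
    rw [ha, hr, ← Real.inv_rpow (by positivity), inv_div]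
  -- key pointwise equivalence for x ∈ (0, t]
  have key : ∀ x : ℝ, x ∈ Set.Ioc (0:ℝ) t → (k ≤ c * (t / x) ^ lam ↔ x ≤ b) := by
    intro x hx
    have hx0 : 0 < x := hx.1
    have htx : 0 < t / x := div_pos ht hx0
    have step1 : k ≤ c * (t / x) ^ lam ↔ k / c ≤ (t / x) ^ lam := by
      rw [div_le_iff₀' hc]
    have step2 : k / c ≤ (t / x) ^ lam ↔ a ≤ t / x := by
      rw [ha, one_div, Real.rpow_inv_le_iff_of_pos (by positivity) htx.le hlam]
    have step3 : a ≤ t / x ↔ x ≤ b := by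
      rw [le_div_iff₀ hx0, hb, ← hainv, mul_comm a x, ← le_div_iff₀ ha0,
        div_eq_mul_inv]
    rw [step1, step2, step3]
  -- measurability
  have hmeas : Measurable fun x : ℝ => c * (t / x) ^ lam :=
    ((measurable_const.div measurable_id).pow_const lam).const_mul c
  have hA : MeasurableSet {x : ℝ | k ≤ c * (t / x) ^ lam} :=
    measurableSet_le measurable_const hmeas
  have hA' : MeasurableSet {x : ℝ | c * (t / x) ^ lam < k} :=
    measurableSet_lt hmeas measurable_const
  have hinter : Set.Ioc 0 t ∩ {x : ℝ | k ≤ c * (t / x) ^ lam} = Set.Ioc 0 b := by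
    ext x
    simp only [Set.mem_inter_iff, Set.mem_Ioc, Set.mem_setOf_eq]
    constructor
    · rintro ⟨hx, hkx⟩
      exact ⟨hx.1, (key x hx).mp hkx⟩
    · rintro ⟨hx0, hxb⟩
      have hx : x ∈ Set.Ioc (0:ℝ) t := ⟨hx0, hxb.trans hbt⟩
      exact ⟨hx, (key x hx).mpr hxb⟩
  have hinter' : Set.Ioc 0 t ∩ {x : ℝ | c * (t / x) ^ lam < k} = Set.Ioc b t := by
    ext x
    simp only [Set.mem_inter_iff, Set.mem_Ioc, Set.mem_setOf_eq]
    constructor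
    · rintro ⟨hx, hkx⟩
      exact ⟨lt_of_not_ge fun h => absurd ((key x hx).mpr h) (not_le.mpr hkx), hx.2⟩
    · rintro ⟨hbx, hxt⟩
      have hx : x ∈ Set.Ioc (0:ℝ) t := ⟨hb0.trans hbx, hxt⟩
      exact ⟨hx, lt_of_not_ge fun h => absurd ((key x hx).mp h) (not_le.mpr hbx)⟩
  have e1 : {ω | k ≤ c * (t / T ω) ^ lam} = T ⁻¹' {x : ℝ | k ≤ c * (t / x) ^ lam} := rfl
  have e2 : {ω | c * (t / T ω) ^ lam < k} = T ⁻¹' {x : ℝ | c * (t / x) ^ lam < k} := rfl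
  constructor
  · rw [e1, hT.measure_preimage hns hnt hA, hinter, Real.volume_Ioc, Real.volume_Ioc,
      sub_zero, sub_zero, ← ENNReal.ofReal_div_of_pos ht, hb, mul_comm,
      mul_div_assoc, div_self ht.ne', mul_one]
  · rw [e2, hT.measure_preimage hns hnt hA', hinter', Real.volume_Ioc, Real.volume_Ioc,
      sub_zero, ← ENNReal.ofReal_div_of_pos ht,
      show t - b = t * (1 - r) by rw [hb]; ring, mul_comm,
      mul_div_assoc, div_self ht.ne', mul_one]
end
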